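/- Let A be a ring with property (SF), let Q be a k×m matrix over A, and let M₁ ≤ M₂ be right A-submodules of A^k both containing the column space R_Q. For i ∈ {1,2}, suppose F_i is a matrix whose columns form a right basis of a finitely generated submodule of M_i which is a free factor of M_i and contains R_Q, and B_i is a matrix with Q = F_i·B_i. Then the left A-submodule of A^m generated by the rows of B₂ is contained in the left A-submodule generated by the rows of B₁ (i.e., taking the Q-dual inverts the order of inclusion). -/

import Mathlib

universe u v

/-- Property (SF): every submodule of every free `A`-module is a free `A`-module. -/
def HasSF (A : Type u) [Ring A] : Prop :=
  ∀ (M : Type v) [AddCommGroup M] [Module A M], Module.Free A M →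
    ∀ N : Submodule A M, Module.Free A ↥N

/-- `M` is a free factor of `N` (written `M ≤* N`): `M ≤ N` and there is a submodule
`M' ≤ N` with `M ⊓ M' = ⊥` and `M ⊔ M' = N` such that `M'` is a free module. -/
def IsFreeFactor {A : Type*} [Ring A] {P : Type*} [AddCommGroup P] [Module A P]
    (M N : Submodule A P) : Prop :=
  M ≤ N ∧ ∃ M' : Submodule A P, M' ≤ N ∧ M ⊓ M' = ⊥ ∧ M ⊔ M' = N ∧ Module.Free A ↥M'

/-- The extension `M ≤ N` is algebraic: the only submodule `L` with `M ≤ L ≤ N`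
which is a free factor of `N` is `L = N`. -/
def IsAlgExt {A : Type*} [Ring A] {P : Type*} [AddCommGroup P] [Module A P]
    (M N : Submodule A P) : Prop :=
  M ≤ N ∧ ∀ L : Submodule A P, M ≤ L → IsFreeFactor L N → L = N

/-- The column space of a matrix `Q`: the right `A`-submodule (i.e. `Aᵐᵒᵖ`-submodule)
of `A^k` generated by the columns of `Q`. -/
def colSpace {A : Type u} [Ring A] {k m : ℕ} (Q : Matrix (Fin k) (Fin m) A) :
    Submodule Aᵐᵒᵖ (Fin k → A) :=
  Submodule.span Aᵐᵒᵖ (Set.range fun j => fun i => Q i j)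

/-- The row space of a matrix `Q`: the left `A`-submodule of `A^m` generated by the
rows of `Q`. -/
def rowSpace {A : Type u} [Ring A] {k m : ℕ} (Q : Matrix (Fin k) (Fin m) A) :
    Submodule A (Fin m → A) :=
  Submodule.span A (Set.range fun i => fun j => Q i j)

/-- Columns of a product `F * X` lie in the column space of `F`. -/
lemma colSpace_mul_le {A : Type u} [Ring A] {k s m : ℕ} (F : Matrix (Fin k) (Fin s) A)
    (X : Matrix (Fin s) (Fin m) A) : colSpace (F * X) ≤ colSpace F := by
  rw [colSpace, Submodule.span_le]
  rintro _ ⟨j, rfl⟩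
  have h : (fun i => (F * X) i j) = ∑ t, MulOpposite.op (X t j) • (fun i => F i t) := by
    funext i
    simp [Matrix.mul_apply, op_smul_eq_mul]
  show (fun i => (F * X) i j) ∈ (colSpace F : Set _)
  rw [h]
  exact Submodule.sum_mem _ fun t _ =>
    Submodule.smul_mem _ _ (Submodule.subset_span ⟨t, rfl⟩)

theorem qDual_antitone {A : Type u} [Ring A]
    (hSF : HasSF.{u, u} A) (hSFop : HasSF.{u, u} Aᵐᵒᵖ)
    {k m t₁ t₂ : ℕ} (Q : Matrix (Fin k) (Fin m) A)
    (M₁ M₂ : Submodule Aᵐᵒᵖ (Fin k → A)) (hM : M₁ ≤ M₂)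
    (hQM₁ : colSpace Q ≤ M₁) (hQM₂ : colSpace Q ≤ M₂)
    (F₁ : Matrix (Fin k) (Fin t₁) A) (F₂ : Matrix (Fin k) (Fin t₂) A)
    (hF₁ind : LinearIndependent Aᵐᵒᵖ (fun j => fun i => F₁ i j))
    (hF₂ind : LinearIndependent Aᵐᵒᵖ (fun j => fun i => F₂ i j))
    (hQF₁ : colSpace Q ≤ colSpace F₁) (hF₁ff : IsFreeFactor (colSpace F₁) M₁)
    (hQF₂ : colSpace Q ≤ colSpace F₂) (hF₂ff : IsFreeFactor (colSpace F₂) M₂)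
    (B₁ : Matrix (Fin t₁) (Fin m) A) (B₂ : Matrix (Fin t₂) (Fin m) A)
    (hB₁ : Q = F₁ * B₁) (hB₂ : Q = F₂ * B₂) :
    rowSpace B₂ ≤ rowSpace B₁ := by
  classical
  obtain ⟨hF₂le, M', hM'le, hinf, hsup, _⟩ := hF₂ff
  -- decompose each column of F₁ along M₂ = colSpace F₂ ⊔ M'
  have hcol : ∀ j : Fin t₁, ∃ (c : Fin t₂ → Aᵐᵒᵖ) (w : Fin k → A), w ∈ M' ∧
      (fun i => F₁ i j) = (∑ s, c s • (fun i => F₂ i s)) + w := by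
    intro j
    have h1 : (fun i => F₁ i j) ∈ M₂ :=
      hM (hF₁ff.1 (Submodule.subset_span ⟨j, rfl⟩))
    rw [← hsup] at h1
    obtain ⟨x, hx, w, hw, hxw⟩ := Submodule.mem_sup.mp h1
    rw [colSpace] at hx
    obtain ⟨c, hc⟩ := (Submodule.mem_span_range_iff_exists_fun _).mp hx
    exact ⟨c, w, hw, by rw [hc, hxw]⟩
  choose c w hw hdecomp using hcol
  set C : Matrix (Fin t₂) (Fin t₁) A := fun s j => (c j s).unop with hC
  have hF₁eq : ∀ i j, F₁ i j = (F₂ * C) i j + w j i := by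
    intro i j
    have := congrFun (hdecomp j) i
    rw [Matrix.mul_apply]
    simpa [Matrix.mul_apply, MulOpposite.smul_eq_mul_unop, hC] using this
  -- Q columns minus (F₂ * (C * B₁)) columns lie in both colSpace F₂ and M'
  have hdiff : ∀ l : Fin m,
      (fun i => Q i l) - (fun i => (F₂ * (C * B₁)) i l)
        = ∑ j, MulOpposite.op (B₁ j l) • w j := by
    intro l
    funext i
    have hql : Q i l = ∑ j, ((F₂ * C) i j + w j i) * B₁ j l := by
      rw [hB₁, Matrix.mul_apply]
      exact Finset.sum_congr rfl fun j _ => by rw [hF₁eq i j]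
    have h2 : (F₂ * (C * B₁)) i l = ∑ j, (F₂ * C) i j * B₁ j l := by
      rw [← Matrix.mul_assoc, Matrix.mul_apply]
    simp only [Pi.sub_apply, Finset.sum_apply, Pi.smul_apply, op_smul_eq_mul, hql, h2,
      add_mul, Finset.sum_add_distrib, add_sub_cancel_left]
  have hQeq : F₂ * B₂ = F₂ * (C * B₁) := by
    have key : ∀ l : Fin m, (fun i => Q i l) = fun i => (F₂ * (C * B₁)) i l := by
      intro l
      have hmem1 : (fun i => Q i l) - (fun i => (F₂ * (C * B₁)) i l) ∈ colSpace F₂ := by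
        apply Submodule.sub_mem
        · exact hQF₂ (Submodule.subset_span ⟨l, rfl⟩)
        · exact colSpace_mul_le F₂ (C * B₁) (Submodule.subset_span ⟨l, rfl⟩)
      have hmem2 : (fun i => Q i l) - (fun i => (F₂ * (C * B₁)) i l) ∈ M' := by
        rw [hdiff l]
        exact Submodule.sum_mem _ fun j _ => Submodule.smul_mem _ _ (hw j)
      have : (fun i => Q i l) - (fun i => (F₂ * (C * B₁)) i l) ∈
          colSpace F₂ ⊓ M' := ⟨hmem1, hmem2⟩
      rw [hinf, Submodule.mem_bot, sub_eq_zero] at this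
      exact this
    rw [← hB₂]
    funext i l
    exact congrFun (key l) i
  have hB₂eq : B₂ = C * B₁ := by
    funext s l
    have hsum : ∑ s, (MulOpposite.op (B₂ s l - (C * B₁) s l)) •
        (fun i => F₂ i s) = (0 : Fin k → A) := by
      funext i
      have h1 : (F₂ * B₂) i l = (F₂ * (C * B₁)) i l := by rw [hQeq]
      rw [Matrix.mul_apply, Matrix.mul_apply] at h1
      simp only [Finset.sum_apply, Pi.smul_apply, op_smul_eq_mul, Pi.zero_apply,
        mul_sub, Finset.sum_sub_distrib]
      rw [h1, sub_self]
    have := Fintype.linearIndependent_iff.mp hF₂ind _ hsum s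
    have h0 : B₂ s l - (C * B₁) s l = 0 := by
      have := congrArg MulOpposite.unop this
      simpa using this
    exact sub_eq_zero.mp h0
  -- conclude
  rw [hB₂eq, rowSpace, Submodule.span_le]
  rintro _ ⟨s, rfl⟩
  have hrow : (fun l => (C * B₁) s l) = ∑ j, C s j • (fun l => B₁ j l) := by
    funext l
    simp [Matrix.mul_apply]
  show (fun l => (C * B₁) s l) ∈ (rowSpace B₁ : Set _)
  rw [hrow]
  exact Submodule.sum_mem _ fun j _ =>
    Submodule.smul_mem _ _ (Submodule.subset_span ⟨j, rfl⟩)
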